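/- Let μ be a probability measure on X × Y with marginals μ_X and μ_Y, and suppose μ ≪ μ_X ⊗ μ_Y with Radon–Nikodym density r = dμ/d(μ_X ⊗ μ_Y) satisfying 0 < c ≤ r(x,y) ≤ C < ∞ for constants c, C. For each integer K ≥ 1 define I_K = E[ log( r(x, y₁) / ((1/K) · Σ_{k=1}^K r(x, y_k)) ) ], where (x, y₁) ∼ μ and y₂, …, y_K are i.i.d. ∼ μ_Y independent of (x, y₁). Then I_K → klDiv(μ, μ_X ⊗ μ_Y) as K → ∞; that is, with the optimal critic the K-sample InfoNCE bound is asymptotically tight. -/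

import Mathlib

open MeasureTheory Real Filter

open scoped ENNReal NNReal
set_option maxHeartbeats 1000000



private lemma bddInt {α : Type*} [MeasurableSpace α] {μ : Measure α} [IsFiniteMeasure μ]
    {f : α → ℝ} (hf : AEStronglyMeasurable f μ) {M : ℝ} (h : ∀ a, |f a| ≤ M) :
    Integrable f μ :=
  ⟨hf, HasFiniteIntegral.of_bounded (C := M) (ae_of_all _ (by simpa using h))⟩

private lemma log_ge_aux {c t : ℝ} (hc : 0 < c) (hct : c ≤ t) :
    (t - 1) - (t - 1) ^ 2 / c ≤ Real.log t := by
  have ht : 0 < t := lt_of_lt_of_le hc hct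
  have h1 : Real.log t⁻¹ ≤ t⁻¹ - 1 := Real.log_le_sub_one_of_pos (by positivity)
  rw [Real.log_inv] at h1
  have h2 : (t - 1) / t ≤ Real.log t := by
    have he : (t - 1) / t = 1 - t⁻¹ := by field_simp
    rw [he]; linarith
  have h3 : (t - 1) - (t - 1) ^ 2 / t = (t - 1) / t := by field_simp; ring
  have h4 : (t - 1) ^ 2 / t ≤ (t - 1) ^ 2 / c := by gcongr
  linarith

private lemma prod_eq_pair {M : Type*} [CommMonoid M] {n : ℕ} {j k : Fin n} (hjk : j ≠ k)
    (G : Fin n → M) (hG : ∀ i, i ≠ j → i ≠ k → G i = 1) :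
    ∏ i, G i = G j * G k := by
  rw [← Finset.prod_pair hjk]
  refine (Finset.prod_subset (Finset.subset_univ _) fun x _ hx => ?_).symm
  simp only [Finset.mem_insert, Finset.mem_singleton, not_or] at hx
  exact hG x hx.1 hx.2

private lemma integral_pi_prod {Y : Type*} [MeasurableSpace Y] (ν : Measure Y) [SigmaFinite ν]
    {n : ℕ} (f : Fin n → Y → ℝ) :
    ∫ x : Fin n → Y, ∏ i, f i (x i) ∂(Measure.pi fun _ => ν) = ∏ i, ∫ y, f i y ∂ν := by
  letI : MeasureSpace Y := ⟨ν⟩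
  exact MeasureTheory.integral_fintype_prod_eq_prod f

private lemma integral_pi_eval {Y : Type*} [MeasurableSpace Y] (ν : Measure Y)
    [IsProbabilityMeasure ν] {n : ℕ} (h : Y → ℝ) (k : Fin n) :
    ∫ x : Fin n → Y, h (x k) ∂(Measure.pi fun _ => ν) = ∫ y, h y ∂ν := by
  classical
  have key := integral_pi_prod ν (Function.update (fun _ : Fin n => fun _ : Y => (1:ℝ)) k h)
  have h1 : ∀ x : Fin n → Y,
      (∏ i, Function.update (fun _ : Fin n => fun _ : Y => (1:ℝ)) k h i (x i)) = h (x k) := by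
    intro x
    rw [Finset.prod_eq_single_of_mem k (Finset.mem_univ k)]
    · simp
    · intro i _ hik; simp [Function.update_of_ne hik]
  have h2 : (∏ i, ∫ y, Function.update (fun _ : Fin n => fun _ : Y => (1:ℝ)) k h i y ∂ν)
      = ∫ y, h y ∂ν := by
    rw [Finset.prod_eq_single_of_mem k (Finset.mem_univ k)]
    · simp
    · intro i _ hik; simp [Function.update_of_ne hik]
  rw [← h2, ← key]
  exact integral_congr_ae (ae_of_all _ fun x => (h1 x).symm) |>.symm ▸ rfl

private lemma integral_pi_eval_mul {Y : Type*} [MeasurableSpace Y] (ν : Measure Y)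
    [IsProbabilityMeasure ν] {n : ℕ} (h h' : Y → ℝ) {j k : Fin n} (hjk : j ≠ k) :
    ∫ x : Fin n → Y, h (x j) * h' (x k) ∂(Measure.pi fun _ => ν)
      = (∫ y, h y ∂ν) * ∫ y, h' y ∂ν := by
  classical
  set F := Function.update (Function.update (fun _ : Fin n => fun _ : Y => (1:ℝ)) j h) k h' with hF
  have key := integral_pi_prod ν F
  have hFj : F j = h := by
    rw [hF, Function.update_of_ne hjk, Function.update_self]
  have hFk : F k = h' := by rw [hF, Function.update_self]
  have hFi : ∀ i, i ≠ j → i ≠ k → F i = fun _ => (1:ℝ) := by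
    intro i hij hik
    rw [hF, Function.update_of_ne hik, Function.update_of_ne hij]
  have h1 : ∀ x : Fin n → Y, (∏ i, F i (x i)) = h (x j) * h' (x k) := by
    intro x
    rw [prod_eq_pair hjk (fun i => F i (x i)) (fun i h1 h2 => by simpa using congrFun (hFi i h1 h2) (x i))]
    rw [hFj, hFk]
  have h2 : (∏ i, ∫ y, F i y ∂ν) = (∫ y, h y ∂ν) * ∫ y, h' y ∂ν := by
    rw [prod_eq_pair hjk (fun i => ∫ y, F i y ∂ν) (fun i ha hb => by simp [hFi i ha hb])]
    rw [hFj, hFk]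
  calc ∫ x : Fin n → Y, h (x j) * h' (x k) ∂(Measure.pi fun _ => ν)
      = ∫ x : Fin n → Y, ∏ i, F i (x i) ∂(Measure.pi fun _ => ν) := by
        exact integral_congr_ae (ae_of_all _ fun x => (h1 x).symm)
    _ = ∏ i, ∫ y, F i y ∂ν := key
    _ = _ := h2

private lemma integral_fst_prod {α β : Type*} [MeasurableSpace α] [MeasurableSpace β]
    (μ : Measure α) [SigmaFinite μ] (ν : Measure β) [IsProbabilityMeasure ν]
    {f : α → ℝ} (hf : AEStronglyMeasurable f μ) :
    ∫ p : α × β, f p.1 ∂(μ.prod ν) = ∫ a, f a ∂μ := by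
  have hmap : (μ.prod ν).map Prod.fst = μ := by
    rw [Measure.map_fst_prod]; simp
  conv_rhs => rw [← hmap]
  exact (integral_map measurable_fst.aemeasurable (hmap.symm ▸ hf)).symm

/-- The Kullback–Leibler divergence `klDiv μ ν = ∫ log (dμ/dν) dμ`. -/
noncomputable def klDiv {Ω : Type*} [MeasurableSpace Ω] (μ ν : Measure Ω) : ℝ :=
  ∫ ω, Real.log ((μ.rnDeriv ν ω).toReal) ∂μ

/-- **Asymptotic tightness of InfoNCE with the optimal critic.**
Let `μ` be a probability measure on `X × Y` with marginals `μ_X, μ_Y`, absolutely continuous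
with respect to `μ_X ⊗ μ_Y` with density `r = dμ/d(μ_X ⊗ μ_Y)` satisfying
`0 < c ≤ r ≤ C < ∞`.  For each `K ≥ 1` let
`I K = E[ log ( r(x, y₁) / ((1/K) Σ_{k=1}^K r(x, y_k)) ) ]`, where `(x, y₁) ∼ μ` and
`y₂, …, y_K` are i.i.d. `μ_Y`, independent of `(x, y₁)`.  Then `I K → klDiv(μ, μ_X ⊗ μ_Y)`
as `K → ∞`. -/
theorem infoNCE_optimal_critic_tendsto_klDiv {X Y : Type*} [MeasurableSpace X]
    [MeasurableSpace Y] (μ : Measure (X × Y)) [IsProbabilityMeasure μ]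
    (r : X × Y → ℝ) (hr : Measurable r) (c C : ℝ) (hc : 0 < c)
    (hrc : ∀ p, c ≤ r p) (hrC : ∀ p, r p ≤ C)
    (hdens : μ = ((μ.map Prod.fst).prod (μ.map Prod.snd)).withDensity
      (fun p => ENNReal.ofReal (r p)))
    (I : ℕ → ℝ)
    (hI : ∀ K, 1 ≤ K → I K =
      ∫ p : (X × Y) × (Fin (K - 1) → Y),
        Real.log (r p.1 / ((1 / (K : ℝ)) * (r p.1 + ∑ k, r (p.1.1, p.2 k))))
        ∂(μ.prod (Measure.pi fun _ : Fin (K - 1) => μ.map Prod.snd))) :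
    Tendsto I atTop (nhds (klDiv μ ((μ.map Prod.fst).prod (μ.map Prod.snd)))) := by
  classical
  set ν := μ.map Prod.snd with hν
  set μX := μ.map Prod.fst with hμX
  haveI hνP : IsProbabilityMeasure ν := Measure.isProbabilityMeasure_map measurable_snd.aemeasurable
  haveI hμXP : IsProbabilityMeasure μX := Measure.isProbabilityMeasure_map measurable_fst.aemeasurable
  set N := μX.prod ν with hN
  have hf : Measurable fun p : X × Y => ENNReal.ofReal (r p) := hr.ennreal_ofReal
  have hμN : μ ≪ N := by
    conv_lhs => rw [hdens]
    exact withDensity_absolutelyContinuous _ _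
  -- nonemptiness and c ≤ C
  have hne : Nonempty (X × Y) := by
    by_contra h
    have h0 : (Set.univ : Set (X × Y)) = ∅ := Set.univ_eq_empty_iff.mpr (not_nonempty_iff.mp h)
    have := measure_univ (μ := μ)
    rw [h0] at this; simp at this
  have hcC : c ≤ C := (hrc hne.some).trans (hrC hne.some)
  have hC0 : 0 < C := lt_of_lt_of_le hc hcC
  -- Step A : klDiv = ∫ log r dμ
  have hrn : (fun p => Real.log ((μ.rnDeriv N p).toReal)) =ᵐ[μ] fun p => Real.log (r p) := by
    have h1 : μ.rnDeriv N =ᵐ[N] fun p => ENNReal.ofReal (r p) := by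
      conv_lhs => rw [hdens]
      exact Measure.rnDeriv_withDensity N hf
    filter_upwards [hμN.ae_eq h1] with p hp
    rw [hp, ENNReal.toReal_ofReal (hc.trans_le (hrc p)).le]
  have hkl : klDiv μ N = ∫ p, Real.log (r p) ∂μ := integral_congr_ae hrn
  -- Step B : marginal density is 1
  set G : X → ℝ≥0∞ := fun x => ∫⁻ y, ENNReal.ofReal (r (x, y)) ∂ν with hG
  have hGmeas : Measurable G := Measurable.lintegral_prod_right' hf
  have hwd : μX.withDensity G = μX := by
    ext s hs
    rw [withDensity_apply _ hs]
    have h1 : μX s = μ (Prod.fst ⁻¹' s) := Measure.map_apply measurable_fst hs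
    have h2 : μ (Prod.fst ⁻¹' s) = ∫⁻ p in s ×ˢ Set.univ, ENNReal.ofReal (r p) ∂N := by
      conv_lhs => rw [hdens]
      rw [← Set.prod_univ, withDensity_apply _ (hs.prod MeasurableSet.univ)]
    rw [h1, h2, ← Measure.prod_restrict, Measure.restrict_univ,
      lintegral_prod _ hf.aemeasurable]
  have hG1 : G =ᵐ[μX] 1 := by
    have h1 := Measure.rnDeriv_withDensity μX hGmeas
    rw [hwd] at h1
    exact h1.symm.trans (Measure.rnDeriv_self μX)
  have hg : ∀ᵐ x ∂μX, ∫ y, r (x, y) ∂ν = 1 := by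
    filter_upwards [hG1] with x hx
    have h2 : ∫ y, r (x, y) ∂ν = (G x).toReal := by
      rw [integral_eq_lintegral_of_nonneg_ae (ae_of_all _ fun y => (hc.trans_le (hrc _)).le)
        (hr.comp measurable_prodMk_left).aestronglyMeasurable]
    rw [h2, hx]; simp
  have hgμ : ∀ᵐ q : X × Y ∂μ, ∫ y, r (q.1, y) ∂ν = 1 := by
    exact ae_of_ae_map (f := Prod.fst) (measurable_fst.aemeasurable)
      (p := fun x => ∫ y, r (x, y) ∂ν = 1) hg
  -- constants
  set m := ∫ p, r p ∂μ with hm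
  set B := C + 1 with hB
  have hB0 : 0 < B := by rw [hB]; linarith
  have habs : ∀ p, |r p - 1| ≤ B := fun p => abs_le.2
    ⟨by rw [hB]; nlinarith [hrc p], by rw [hB]; linarith [hrC p]⟩
  have habsr : ∀ p, |r p| ≤ C := fun p => abs_le.2
    ⟨by nlinarith [hrc p], hrC p⟩
  have hlogM : ∀ t, c ≤ t → t ≤ C → |Real.log t| ≤ |Real.log c| + |Real.log C| := by
    intro t h1 h2
    have l1 : Real.log c ≤ Real.log t := Real.log_le_log hc h1
    have l2 : Real.log t ≤ Real.log C := Real.log_le_log (hc.trans_le h1) h2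
    refine abs_le.2 ⟨?_, ?_⟩
    · have := neg_abs_le (Real.log c); linarith [abs_nonneg (Real.log C)]
    · have := le_abs_self (Real.log C); linarith [abs_nonneg (Real.log c)]
  -- the key quantitative bound
  have key : ∀ K : ℕ, 1 ≤ K → |I K - klDiv μ N| ≤ (|m - 1| + B ^ 2 / c) / K := by
    intro K hK
    have hIK := hI K hK
    set n := K - 1 with hn
    have hKn : K = n + 1 := (Nat.succ_pred_eq_of_pos hK).symm
    have hK0 : (0:ℝ) < (K:ℝ) := by exact_mod_cast hK
    have hKR : (K:ℝ) = (n:ℝ) + 1 := by rw [hKn]; push_cast; ring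
    set Ppi : Measure (Fin n → Y) := Measure.pi fun _ => ν with hπ
    haveI : IsProbabilityMeasure Ppi := by rw [hπ]; infer_instance
    set P := μ.prod Ppi with hP
    haveI : IsProbabilityMeasure P := by rw [hP]; infer_instance
    -- functions on the product space
    set W : (X × Y) × (Fin n → Y) → ℝ := fun p => r p.1 - 1 with hWdef
    set V : Fin n → (X × Y) × (Fin n → Y) → ℝ :=
      fun k p => r (p.1.1, p.2 k) - 1 with hVdef
    set A : (X × Y) × (Fin n → Y) → ℝ :=
      fun p => 1 / (K:ℝ) * (r p.1 + ∑ k, r (p.1.1, p.2 k)) with hAdef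
    -- measurability
    have hmW : Measurable W := (hr.comp measurable_fst).sub measurable_const
    have hmV : ∀ k, Measurable (V k) := fun k =>
      (hr.comp ((measurable_fst.comp measurable_fst).prodMk
        ((measurable_pi_apply k).comp measurable_snd))).sub measurable_const
    have hmA : Measurable A := measurable_const.mul ((hr.comp measurable_fst).add
      (Finset.measurable_sum Finset.univ fun k _ =>
        hr.comp ((measurable_fst.comp measurable_fst).prodMk
          ((measurable_pi_apply k).comp measurable_snd))))
    -- integrability
    have intW : Integrable W P := bddInt hmW.aestronglyMeasurable fun p => habs p.1
    have intV : ∀ k, Integrable (V k) P := fun k =>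
      bddInt (hmV k).aestronglyMeasurable fun p => habs _
    have intW2 : Integrable (fun p => W p ^ 2) P :=
      bddInt ((hmW.pow_const 2).aestronglyMeasurable) fun p => by
        rw [abs_pow]; exact pow_le_pow_left₀ (abs_nonneg _) (habs p.1) 2
    have intV2 : ∀ k, Integrable (fun p => V k p ^ 2) P := fun k =>
      bddInt (((hmV k).pow_const 2).aestronglyMeasurable) fun p => by
        rw [abs_pow]; exact pow_le_pow_left₀ (abs_nonneg _) (habs _) 2
    have intWV : ∀ k, Integrable (fun p => 2 * (W p * V k p)) P := fun k =>
      bddInt ((measurable_const.mul (hmW.mul (hmV k))).aestronglyMeasurable)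
        (M := 2 * (B * B)) fun p => by
          rw [abs_mul, abs_mul, abs_two]
          gcongr <;> [exact habs p.1; exact habs _]
    have intVV : ∀ j k, Integrable (fun p => V j p * V k p) P := fun j k =>
      bddInt (((hmV j).mul (hmV k)).aestronglyMeasurable) (M := B * B) fun p => by
        rw [abs_mul]; gcongr <;> [exact habs _; exact habs _]
    have intVsum : Integrable (fun p => ∑ k, V k p) P :=
      integrable_finset_sum _ fun k _ => intV k
    have intrfst : Integrable (fun p : (X × Y) × (Fin n → Y) => r p.1) P :=
      bddInt ((hr.comp measurable_fst).aestronglyMeasurable) fun p => habsr p.1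
    have intlogr : Integrable (fun p : (X × Y) × (Fin n → Y) => Real.log (r p.1)) P :=
      bddInt (((Real.measurable_log.comp hr).comp measurable_fst).aestronglyMeasurable)
        fun p => hlogM _ (hrc p.1) (hrC p.1)
    have intry : ∀ q : X × Y, Integrable (fun y => r (q.1, y)) ν := fun q =>
      bddInt ((hr.comp measurable_prodMk_left).aestronglyMeasurable) fun y => habsr _
    -- pointwise bounds for A
    have hsumlb : ∀ p : (X × Y) × (Fin n → Y), (n:ℝ) * c ≤ ∑ k, r (p.1.1, p.2 k) := by
      intro p
      have := Finset.card_nsmul_le_sum Finset.univ (fun k : Fin n => r (p.1.1, p.2 k)) c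
        (fun k _ => hrc _)
      simpa [nsmul_eq_mul] using this
    have hsumub : ∀ p : (X × Y) × (Fin n → Y), (∑ k, r (p.1.1, p.2 k)) ≤ (n:ℝ) * C := by
      intro p
      have := Finset.sum_le_card_nsmul Finset.univ (fun k : Fin n => r (p.1.1, p.2 k)) C
        (fun k _ => hrC _)
      simpa [nsmul_eq_mul] using this
    have hKinv : 1 / (K:ℝ) * (K:ℝ) = 1 := by field_simp
    have hAlb : ∀ p, c ≤ A p := by
      intro p
      have h1 : c * (K:ℝ) ≤ r p.1 + ∑ k, r (p.1.1, p.2 k) := by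
        rw [hKR]; have := hrc p.1; have := hsumlb p; nlinarith
      have h2 : 1 / (K:ℝ) * (c * (K:ℝ)) ≤ 1 / (K:ℝ) * (r p.1 + ∑ k, r (p.1.1, p.2 k)) :=
        mul_le_mul_of_nonneg_left h1 (by positivity)
      have h3 : 1 / (K:ℝ) * (c * (K:ℝ)) = c := by field_simp
      calc c = 1 / (K:ℝ) * (c * (K:ℝ)) := h3.symm
        _ ≤ A p := h2
    have hAub : ∀ p, A p ≤ C := by
      intro p
      have h1 : r p.1 + ∑ k, r (p.1.1, p.2 k) ≤ C * (K:ℝ) := by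
        rw [hKR]; have := hrC p.1; have := hsumub p; nlinarith
      have h2 : 1 / (K:ℝ) * (r p.1 + ∑ k, r (p.1.1, p.2 k)) ≤ 1 / (K:ℝ) * (C * (K:ℝ)) :=
        mul_le_mul_of_nonneg_left h1 (by positivity)
      have h3 : 1 / (K:ℝ) * (C * (K:ℝ)) = C := by field_simp
      calc A p ≤ 1 / (K:ℝ) * (C * (K:ℝ)) := h2
        _ = C := h3
    have intlogA : Integrable (fun p => Real.log (A p)) P :=
      bddInt ((Real.measurable_log.comp hmA).aestronglyMeasurable)
        fun p => hlogM _ (hAlb p) (hAub p)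
    have intA1 : Integrable (fun p => A p - 1) P :=
      bddInt ((hmA.sub measurable_const).aestronglyMeasurable) (M := C + 1) fun p =>
        abs_le.2 ⟨by linarith [hAlb p, hc], by linarith [hAub p]⟩
    have intA2 : Integrable (fun p => (A p - 1) ^ 2) P :=
      bddInt (((hmA.sub measurable_const).pow_const 2).aestronglyMeasurable)
        (M := (C+1)^2) fun p => by
          rw [abs_pow]
          refine pow_le_pow_left₀ (abs_nonneg _) (abs_le.2 ⟨?_, ?_⟩) 2
          · linarith [hAlb p, hc]
          · linarith [hAub p]
    -- first moments
    have hrfst : ∫ p, r p.1 ∂P = m := by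
      rw [hP]
      exact integral_fst_prod μ Ppi hr.aestronglyMeasurable
    have hWint : ∫ p, W p ∂P = m - 1 := by
      have h1 : ∫ p, W p ∂P = ∫ p, r p.1 ∂P - ∫ _p, (1:ℝ) ∂P := by
        rw [← integral_sub intrfst (integrable_const 1)]
      rw [h1, hrfst]; simp
    have hinnerV : ∀ (q : X × Y) (k : Fin n),
        ∫ ω : Fin n → Y, (r (q.1, ω k) - 1) ∂Ppi = (∫ y, r (q.1, y) ∂ν) - 1 := by
      intro q k
      rw [hπ, integral_pi_eval ν (fun y => r (q.1, y) - 1) k,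
        integral_sub (intry q) (integrable_const 1)]
      simp
    have hVint : ∀ k, ∫ p, V k p ∂P = 0 := by
      intro k
      rw [hP, integral_prod _ (intV k)]
      have h1 : (fun q : X × Y => ∫ ω, V k (q, ω) ∂Ppi) =ᵐ[μ] fun _ => 0 := by
        filter_upwards [hgμ] with q hq
        have : ∫ ω, V k (q, ω) ∂Ppi = (∫ y, r (q.1, y) ∂ν) - 1 := hinnerV q k
        rw [this, hq]; ring
      rw [integral_congr_ae h1, integral_zero]
    -- cross moments vanish
    have hWVint : ∀ k, ∫ p, W p * V k p ∂P = 0 := by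
      intro k
      have intWVp : Integrable (fun p => W p * V k p) P :=
        bddInt ((hmW.mul (hmV k)).aestronglyMeasurable) (M := B * B)
          fun p => by rw [abs_mul]; gcongr <;> [exact habs _; exact habs _]
      rw [hP, integral_prod _ intWVp]
      have h1 : (fun q : X × Y => ∫ ω, W (q, ω) * V k (q, ω) ∂Ppi) =ᵐ[μ] fun _ => 0 := by
        filter_upwards [hgμ] with q hq
        have h2 : ∫ ω, W (q, ω) * V k (q, ω) ∂Ppi
            = (r q - 1) * ∫ ω, V k (q, ω) ∂Ppi := by
          rw [← integral_const_mul]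
        rw [h2, hinnerV q k, hq]; ring
      rw [integral_congr_ae h1, integral_zero]
    have hVVint : ∀ j k, j ≠ k → ∫ p, V j p * V k p ∂P = 0 := by
      intro j k hjk
      rw [hP, integral_prod _ (intVV j k)]
      have h1 : (fun q : X × Y => ∫ ω, V j (q, ω) * V k (q, ω) ∂Ppi) =ᵐ[μ] fun _ => 0 := by
        filter_upwards [hgμ] with q hq
        have h2 : ∫ ω, V j (q, ω) * V k (q, ω) ∂Ppi
            = ((∫ y, r (q.1, y) ∂ν) - 1) * ((∫ y, r (q.1, y) ∂ν) - 1) := by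
          rw [hπ]
          have h3 : ∫ x : Fin n → Y, (r (q.1, x j) - 1) * (r (q.1, x k) - 1)
                ∂(Measure.pi fun _ : Fin n => ν)
              = (∫ y, (r (q.1, y) - 1) ∂ν) * ∫ y, (r (q.1, y) - 1) ∂ν :=
            integral_pi_eval_mul ν (fun y => r (q.1, y) - 1) (fun y => r (q.1, y) - 1) hjk
          have h4 : ∫ y, (r (q.1, y) - 1) ∂ν = (∫ y, r (q.1, y) ∂ν) - 1 := by
            rw [integral_sub (intry q) (integrable_const 1)]; simp
          rw [h4] at h3
          exact h3
        rw [h2, hq]; ring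
      rw [integral_congr_ae h1, integral_zero]
    -- second moment bounds
    have hW2 : ∫ p, W p ^ 2 ∂P ≤ B ^ 2 := by
      calc ∫ p, W p ^ 2 ∂P ≤ ∫ _p, B ^ 2 ∂P := by
            refine integral_mono intW2 (integrable_const _) fun p => ?_
            rw [← sq_abs]; exact pow_le_pow_left₀ (abs_nonneg _) (habs p.1) 2
        _ = B ^ 2 := by simp
    have hV2 : ∀ k, ∫ p, V k p ^ 2 ∂P ≤ B ^ 2 := by
      intro k
      calc ∫ p, V k p ^ 2 ∂P ≤ ∫ _p, B ^ 2 ∂P := by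
            refine integral_mono (intV2 k) (integrable_const _) fun p => ?_
            rw [← sq_abs]; exact pow_le_pow_left₀ (abs_nonneg _) (habs _) 2
        _ = B ^ 2 := by simp
    -- expansion of the square
    have hexp : ∀ p : (X × Y) × (Fin n → Y),
        (W p + ∑ k, V k p) ^ 2
          = W p ^ 2 + (∑ k, 2 * (W p * V k p)) + ∑ j, ∑ k, V j p * V k p := by
      intro p
      have h1 : (∑ k, 2 * (W p * V k p)) = 2 * (W p * ∑ k, V k p) := by
        rw [Finset.mul_sum, Finset.mul_sum]
      have h2 : (∑ j, ∑ k, V j p * V k p) = (∑ k, V k p) * (∑ k, V k p) :=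
        (Finset.sum_mul_sum _ _ _ _).symm
      rw [h1, h2]; ring
    have hS2 : ∫ p, (W p + ∑ k, V k p) ^ 2 ∂P ≤ (K:ℝ) * B ^ 2 := by
      have h0 : ∫ p, (W p + ∑ k, V k p) ^ 2 ∂P
          = ∫ p, (W p ^ 2 + (∑ k, 2 * (W p * V k p)) + ∑ j, ∑ k, V j p * V k p) ∂P :=
        integral_congr_ae (ae_of_all _ fun p => hexp p)
      have intsum1 : Integrable (fun p => ∑ k, 2 * (W p * V k p)) P :=
        integrable_finset_sum _ fun k _ => intWV k
      have intsum2 : Integrable (fun p => ∑ j, ∑ k, V j p * V k p) P :=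
        integrable_finset_sum _ fun j _ => integrable_finset_sum _ fun k _ => intVV j k
      have h1 : ∫ p, (W p ^ 2 + (∑ k, 2 * (W p * V k p)) + ∑ j, ∑ k, V j p * V k p) ∂P
          = ∫ p, W p ^ 2 ∂P + ∫ p, (∑ k, 2 * (W p * V k p)) ∂P
            + ∫ p, (∑ j, ∑ k, V j p * V k p) ∂P := by
        have intsum12 : Integrable (fun p => W p ^ 2 + ∑ k, 2 * (W p * V k p)) P := by
          exact intW2.add intsum1
        rw [integral_add intsum12 intsum2, integral_add intW2 intsum1]
      have h2 : ∫ p, (∑ k, 2 * (W p * V k p)) ∂P = 0 := by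
        rw [integral_finset_sum _ fun k _ => intWV k]
        refine Finset.sum_eq_zero fun k _ => ?_
        rw [integral_const_mul, hWVint k]; ring
      have h3 : ∫ p, (∑ j, ∑ k, V j p * V k p) ∂P = ∑ j, ∫ p, V j p ^ 2 ∂P := by
        rw [integral_finset_sum _ fun j _ => integrable_finset_sum _ fun k _ => intVV j k]
        refine Finset.sum_congr rfl fun j _ => ?_
        rw [integral_finset_sum _ fun k _ => intVV j k]
        rw [Finset.sum_eq_single_of_mem j (Finset.mem_univ j)]
        · exact integral_congr_ae (ae_of_all _ fun p => by ring)
        · intro k _ hkj; exact hVVint j k (Ne.symm hkj)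
      have h4 : (∑ j : Fin n, ∫ p, V j p ^ 2 ∂P) ≤ (n:ℝ) * B ^ 2 := by
        calc (∑ j : Fin n, ∫ p, V j p ^ 2 ∂P) ≤ ∑ _j : Fin n, B ^ 2 :=
              Finset.sum_le_sum fun j _ => hV2 j
          _ = (n:ℝ) * B ^ 2 := by simp [Finset.sum_const, nsmul_eq_mul]
      rw [h0, h1, h2, h3, hKR]
      nlinarith [hW2, h4]
    -- A - 1 = S / K
    have hA1 : ∀ p, A p - 1 = (W p + ∑ k, V k p) / (K:ℝ) := by
      intro p
      have hsum : ∑ k, V k p = (∑ k, r (p.1.1, p.2 k)) - (n:ℝ) := by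
        rw [hVdef, Finset.sum_sub_distrib]
        simp
      rw [hAdef, hWdef, hsum, hKR]
      have hKne : (n:ℝ) + 1 ≠ 0 := by positivity
      field_simp
      ring
    have hE1 : ∫ p, (A p - 1) ∂P = (m - 1) / (K:ℝ) := by
      have h0 : ∫ p, (A p - 1) ∂P = ∫ p, (W p + ∑ k, V k p) / (K:ℝ) ∂P :=
        integral_congr_ae (ae_of_all _ fun p => hA1 p)
      rw [h0, integral_div, integral_add intW intVsum, hWint,
        integral_finset_sum _ fun k _ => intV k]
      simp [hVint]
    have hE2 : ∫ p, (A p - 1) ^ 2 ∂P ≤ B ^ 2 / (K:ℝ) := by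
      have h0 : ∫ p, (A p - 1) ^ 2 ∂P = ∫ p, (W p + ∑ k, V k p) ^ 2 / (K:ℝ) ^ 2 ∂P :=
        integral_congr_ae (ae_of_all _ fun p => by show (A p - 1) ^ 2 = _; rw [hA1 p, div_pow])
      rw [h0, integral_div]
      rw [div_le_div_iff₀ (by positivity) hK0]
      calc (∫ p, (W p + ∑ k, V k p) ^ 2 ∂P) * (K:ℝ)
          ≤ ((K:ℝ) * B ^ 2) * (K:ℝ) := by gcongr
        _ = B ^ 2 * (K:ℝ) ^ 2 := by ring
    -- bounds on J = ∫ log A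
    have hJub : ∫ p, Real.log (A p) ∂P ≤ (m - 1) / (K:ℝ) := by
      rw [← hE1]
      exact integral_mono intlogA intA1 fun p =>
        Real.log_le_sub_one_of_pos (hc.trans_le (hAlb p))
    have hJlb : (m - 1) / (K:ℝ) - (B ^ 2 / (K:ℝ)) / c ≤ ∫ p, Real.log (A p) ∂P := by
      have h1 : ∫ p, ((A p - 1) - (A p - 1) ^ 2 / c) ∂P ≤ ∫ p, Real.log (A p) ∂P :=
        integral_mono (intA1.sub (intA2.div_const c)) intlogA
          fun p => log_ge_aux hc (hAlb p)
      have h2 : ∫ p, ((A p - 1) - (A p - 1) ^ 2 / c) ∂P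
          = (m - 1) / (K:ℝ) - (∫ p, (A p - 1) ^ 2 ∂P) / c := by
        rw [integral_sub intA1 (intA2.div_const c), hE1, integral_div]
      have h3 : (∫ p, (A p - 1) ^ 2 ∂P) / c ≤ (B ^ 2 / (K:ℝ)) / c := by gcongr
      linarith
    -- I K - klDiv = - ∫ log A
    have hIKkl : I K - klDiv μ N = -∫ p, Real.log (A p) ∂P := by
      have h1 : I K = ∫ p, (Real.log (r p.1) - Real.log (A p)) ∂P := by
        rw [hIK]
        refine integral_congr_ae (ae_of_all _ fun p => ?_)
        show Real.log (r p.1 / (1 / (K:ℝ) * (r p.1 + ∑ k, r (p.1.1, p.2 k))))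
          = Real.log (r p.1) - Real.log (A p)
        have hx : r p.1 ≠ 0 := ne_of_gt (hc.trans_le (hrc p.1))
        have hy : (1 / (K:ℝ) * (r p.1 + ∑ k, r (p.1.1, p.2 k))) ≠ 0 :=
          ne_of_gt (lt_of_lt_of_le hc (hAlb p))
        rw [Real.log_div hx hy]
      have h2 : ∫ p, (Real.log (r p.1) - Real.log (A p)) ∂P
          = ∫ p, Real.log (r p.1) ∂P - ∫ p, Real.log (A p) ∂P :=
        integral_sub intlogr intlogA
      have h3 : ∫ p, Real.log (r p.1) ∂P = klDiv μ N := by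
        rw [hkl, hP]
        exact integral_fst_prod μ Ppi (Real.measurable_log.comp hr).aestronglyMeasurable
      rw [h1, h2, h3]; ring
    -- conclude the bound
    have h7 : (m - 1) / (K:ℝ) ≤ |m - 1| / (K:ℝ) := by gcongr; exact le_abs_self _
    have h8 : -((m - 1) / (K:ℝ)) ≤ |m - 1| / (K:ℝ) := by
      rw [← neg_div]; gcongr; exact neg_le_abs _
    have h9 : (B ^ 2 / (K:ℝ)) / c = (B ^ 2 / c) / (K:ℝ) := by ring
    have h10 : (|m - 1| + B ^ 2 / c) / (K:ℝ)
        = |m - 1| / (K:ℝ) + (B ^ 2 / c) / (K:ℝ) := by ring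
    rw [hIKkl, abs_neg, abs_le]
    constructor
    · rw [h10]; linarith [hJlb, h9]
    · rw [h10]; linarith [hJub]
  -- pass to the limit
  have hlim : Tendsto (fun K : ℕ => (|m - 1| + B ^ 2 / c) / (K:ℝ)) atTop (nhds 0) :=
    tendsto_const_div_atTop_nhds_zero_nat _
  have h2 : Tendsto (fun K => I K - klDiv μ N) atTop (nhds 0) :=
    squeeze_zero_norm' (eventually_atTop.2 ⟨1, fun K hK => by
      rw [Real.norm_eq_abs]; exact key K hK⟩) hlim
  have h3 := h2.add_const (klDiv μ N)
  simpa using h3
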